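/- In the brush/unfolding family setup, assume additionally that ω ⊆ B_{ℝ^N}(0,R₁) and Y ⊆ B_{ℝ^N}(0,R₁) × (0,L) for some R₁, L > 0. Let φ : ℝ^N → ℝ be bounded and Lipschitz, ψ ∈ L²(Y), and for each ε define U_ε(φ,ψ) : Ω^a_ε → ℝ by U_ε(φ,ψ)(x,y) = φ(x) ψ((x − x̄^n_ε)/l^n_ε, y) for (x,y) ∈ Y^n_ε. Suppose (v_ε) ⊆ L²(W) satisfies χ_{ω_ε} v_ε = v_ε a.e. for every ε and v_ε converges weakly in L²(W) to some v as ε → 0. Then ∫_W v_ε(x,ξ,y) · τ_ε(U_ε(φ,ψ))(x,ξ,y) dx dξ dy → ∫_W v(x,ξ,y) φ(x) ψ(ξ,y) dx dξ dy as ε → 0. -/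

import Mathlib

open MeasureTheory Set Bornology Filter

noncomputable section

/-- The tooth `Y^n = {(c + s ξ, y) : (ξ,y) ∈ Y}`. -/
def tooth {N : ℕ} (Y : Set ((Fin N → ℝ) × ℝ)) (c : Fin N → ℝ) (s : ℝ) :
    Set ((Fin N → ℝ) × ℝ) :=
  (fun p : (Fin N → ℝ) × ℝ => (c + s • p.1, p.2)) '' Y

/-- The base `ω^n = c + s ω` of a tooth. -/
def toothBase {N : ℕ} (ω : Set (Fin N → ℝ)) (c : Fin N → ℝ) (s : ℝ) :
    Set (Fin N → ℝ) :=
  (fun ξ : Fin N → ℝ => c + s • ξ) '' ω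

/-- `T` is the unfolding `τφ` of `φ`. -/
def IsUnfolding {N M : ℕ} (ω : Set (Fin N → ℝ)) (xb : Fin M → Fin N → ℝ)
    (l : Fin M → ℝ) (φ : (Fin N → ℝ) × ℝ → ℝ)
    (T : (Fin N → ℝ) × ((Fin N → ℝ) × ℝ) → ℝ) : Prop :=
  (∀ n : Fin M, ∀ x ∈ toothBase ω (xb n) (l n),
      ∀ q : (Fin N → ℝ) × ℝ, T (x, q) = φ (xb n + l n • q.1, q.2)) ∧
  (∀ x ∉ ⋃ n, toothBase ω (xb n) (l n), ∀ q : (Fin N → ℝ) × ℝ, T (x, q) = 0)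




lemma my_integrable_mul {α : Type*} [MeasurableSpace α] {μ : Measure α} {f g : α → ℝ}
    (hf : MemLp f 2 μ) (hg : MemLp g 2 μ) : Integrable (fun z => f z * g z) μ := by
  have h := L2.integrable_inner (𝕜 := ℝ) (hf.toLp f) (hg.toLp g)
  refine h.congr ?_
  filter_upwards [hf.coeFn_toLp, hg.coeFn_toLp] with z h1 h2
  simp [RCLike.inner_apply, h1, h2, mul_comm]

lemma my_cauchy_schwarz {α : Type*} [MeasurableSpace α] {μ : Measure α} {f g : α → ℝ}
    (hf : MemLp f 2 μ) (hg : MemLp g 2 μ) :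
    |∫ z, f z * g z ∂μ| ≤ (eLpNorm f 2 μ).toReal * (eLpNorm g 2 μ).toReal := by
  have h1 : ∫ z, f z * g z ∂μ = @inner ℝ _ _ (hf.toLp f) (hg.toLp g) := by
    rw [L2.inner_def]
    refine integral_congr_ae ?_
    filter_upwards [hf.coeFn_toLp, hg.coeFn_toLp] with z h1 h2
    simp [RCLike.inner_apply, h1, h2, mul_comm]
  rw [h1]
  calc |@inner ℝ _ _ (hf.toLp f) (hg.toLp g)| ≤ ‖hf.toLp f‖ * ‖hg.toLp g‖ :=
        abs_real_inner_le_norm _ _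
    _ = (eLpNorm f 2 μ).toReal * (eLpNorm g 2 μ).toReal := by
        rw [Lp.norm_toLp, Lp.norm_toLp]

lemma toothBase_eq_preimage {N : ℕ} (ω : Set (Fin N → ℝ)) (c : Fin N → ℝ) {s : ℝ} (hs : s ≠ 0) :
    toothBase ω c s = (fun x : Fin N → ℝ => s⁻¹ • (x - c)) ⁻¹' ω := by
  ext x
  constructor
  · rintro ⟨ξ, hξ, rfl⟩
    simpa [smul_smul, inv_mul_cancel₀ hs] using hξ
  · intro hx
    exact ⟨s⁻¹ • (x - c), hx, by simp [smul_smul, mul_inv_cancel₀ hs]⟩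


/-- If `v_ε ⇀ v` weakly in `L²(W)` with `χ_{ω_ε} v_ε = v_ε`, then
`∫_W v_ε τ_ε(U_ε(φ,ψ)) → ∫_W v φ ψ` as `ε → 0`, for `φ` bounded Lipschitz and
`ψ ∈ L²(Y)`. -/
theorem stmt_18 {N : ℕ}
    (Ω' : Set (Fin N → ℝ)) (hΩ'o : IsOpen Ω') (hΩ'b : IsBounded Ω')
    (Y : Set ((Fin N → ℝ) × ℝ)) (hYo : IsOpen Y) (hYne : Y.Nonempty)
    (hYpos : ∀ p ∈ Y, 0 < p.2)
    (R₁ L : ℝ) (hR₁ : 0 < R₁) (hL : 0 < L)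
    (hYsub : Y ⊆ Metric.ball (0 : Fin N → ℝ) R₁ ×ˢ Set.Ioo (0 : ℝ) L)
    (ω : Set (Fin N → ℝ)) (hωm : MeasurableSet ω)
    (hωsub : ω ⊆ Metric.ball (0 : Fin N → ℝ) R₁) (hωvol : volume ω = 1)
    (C : ℝ) (hC : 0 < C)
    (NT : ℝ → ℕ) (xb : (ε : ℝ) → Fin (NT ε) → Fin N → ℝ)
    (l : (ε : ℝ) → Fin (NT ε) → ℝ)
    (hl : ∀ ε ∈ Set.Ioc (0 : ℝ) 1, ∀ n, 0 < l ε n ∧ l ε n ≤ C * ε)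
    (hbase : ∀ ε ∈ Set.Ioc (0 : ℝ) 1, ∀ n, toothBase ω (xb ε n) (l ε n) ⊆ Ω')
    (hbdisj : ∀ ε ∈ Set.Ioc (0 : ℝ) 1, ∀ m n, m ≠ n →
      Disjoint (toothBase ω (xb ε m) (l ε m)) (toothBase ω (xb ε n) (l ε n)))
    (htdisj : ∀ ε ∈ Set.Ioc (0 : ℝ) 1, ∀ m n, m ≠ n →
      Disjoint (tooth Y (xb ε m) (l ε m)) (tooth Y (xb ε n) (l ε n)))
    (K : NNReal) (Cφ : ℝ) (φ : (Fin N → ℝ) → ℝ)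
    (hφlip : LipschitzWith K φ) (hφbdd : ∀ x, |φ x| ≤ Cφ)
    (ψ : (Fin N → ℝ) × ℝ → ℝ) (hψ : MemLp ψ 2 (volume.restrict Y))
    (Uf : ℝ → (Fin N → ℝ) × ℝ → ℝ)
    (hUf : ∀ ε ∈ Set.Ioc (0 : ℝ) 1, ∀ n, ∀ z ∈ tooth Y (xb ε n) (l ε n),
      Uf ε z = φ z.1 * ψ ((l ε n)⁻¹ • (z.1 - xb ε n), z.2))
    (T : ℝ → (Fin N → ℝ) × ((Fin N → ℝ) × ℝ) → ℝ)
    (hT : ∀ ε ∈ Set.Ioc (0 : ℝ) 1, IsUnfolding ω (xb ε) (l ε) (Uf ε) (T ε))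
    (v : ℝ → (Fin N → ℝ) × ((Fin N → ℝ) × ℝ) → ℝ)
    (vlim : (Fin N → ℝ) × ((Fin N → ℝ) × ℝ) → ℝ)
    (hv : ∀ ε ∈ Set.Ioc (0 : ℝ) 1, MemLp (v ε) 2 (volume.restrict (Ω' ×ˢ Y)))
    (hχv : ∀ ε ∈ Set.Ioc (0 : ℝ) 1,
      (fun z : (Fin N → ℝ) × ((Fin N → ℝ) × ℝ) =>
        Set.indicator (⋃ n, toothBase ω (xb ε n) (l ε n)) (fun _ => (1 : ℝ)) z.1 * v ε z)
        =ᵐ[volume.restrict (Ω' ×ˢ Y)] v ε)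
    (hvlim : MemLp vlim 2 (volume.restrict (Ω' ×ˢ Y)))
    (hweak : ∀ w : (Fin N → ℝ) × ((Fin N → ℝ) × ℝ) → ℝ,
      MemLp w 2 (volume.restrict (Ω' ×ˢ Y)) →
      Tendsto (fun ε => ∫ z in Ω' ×ˢ Y, v ε z * w z)
        (nhdsWithin 0 (Set.Ioc (0 : ℝ) 1))
        (nhds (∫ z in Ω' ×ˢ Y, vlim z * w z))) :
    Tendsto (fun ε => ∫ z in Ω' ×ˢ Y, v ε z * T ε z)
      (nhdsWithin 0 (Set.Ioc (0 : ℝ) 1))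
      (nhds (∫ z in Ω' ×ˢ Y, vlim z * (φ z.1 * ψ z.2))) := by
  have hval : ∀ ε ∈ Set.Ioc (0:ℝ) 1, ∀ z : (Fin N → ℝ) × ((Fin N → ℝ) × ℝ), z.2 ∈ Y →
      ∀ n, z.1 ∈ toothBase ω (xb ε n) (l ε n) → T ε z = φ (xb ε n + l ε n • z.2.1) * ψ z.2 := by
    intro ε hε z hz2 n hn
    have h1 := (hT ε hε).1 n z.1 hn z.2
    have hmem : (xb ε n + l ε n • z.2.1, z.2.2) ∈ tooth Y (xb ε n) (l ε n) := ⟨z.2, hz2, rfl⟩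
    have h2 := hUf ε hε n _ hmem
    have hlne : l ε n ≠ 0 := (hl ε hε n).1.ne'
    have h3 : T ε z = Uf ε (xb ε n + l ε n • z.2.1, z.2.2) := h1
    rw [h3, h2]
    simp [add_sub_cancel_left, smul_smul, inv_mul_cancel₀ hlne]
  have hzero : ∀ ε ∈ Set.Ioc (0:ℝ) 1, ∀ z : (Fin N → ℝ) × ((Fin N → ℝ) × ℝ),
      z.1 ∉ ⋃ n, toothBase ω (xb ε n) (l ε n) → T ε z = 0 :=
    fun ε hε z hz => (hT ε hε).2 z.1 hz z.2
  set μ := volume.restrict (Ω' ×ˢ Y) with hμdef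
  have hμP : μ = (volume.restrict Ω').prod (volume.restrict Y) := by
    rw [hμdef, Measure.volume_eq_prod, ← Measure.prod_restrict]
  have hΩfin : (volume Ω') ≠ ⊤ := hΩ'b.measure_lt_top.ne
  -- ψ ∘ snd is in L²
  have hψs : MemLp (fun z : (Fin N → ℝ) × ((Fin N → ℝ) × ℝ) => ψ z.2) 2 μ := by
    have hmp : MeasurePreserving (Prod.snd)
        ((volume.restrict Ω').prod (volume.restrict Y))
        (((volume : Measure (Fin N → ℝ)) Ω') • volume.restrict Y) := by
      refine ⟨measurable_snd, ?_⟩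
      rw [Measure.map_snd_prod, Measure.restrict_apply_univ]
    have h1 : MemLp ψ 2 (((volume : Measure (Fin N → ℝ)) Ω') • volume.restrict Y) :=
      hψ.smul_measure hΩfin
    rw [hμP]
    exact h1.comp_measurePreserving hmp
  -- w₀ is in L²
  have hCφ0 : 0 ≤ Cφ := le_trans (abs_nonneg _) (hφbdd 0)
  have hw₀ : MemLp (fun z : (Fin N → ℝ) × ((Fin N → ℝ) × ℝ) => φ z.1 * ψ z.2) 2 μ := by
    refine MemLp.of_le (hψs.const_mul Cφ)
      (((hφlip.continuous.comp continuous_fst).aestronglyMeasurable).mul hψs.1) ?_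
    refine Eventually.of_forall fun z => ?_
    rw [Real.norm_eq_abs, Real.norm_eq_abs, abs_mul, abs_mul]
    exact mul_le_mul_of_nonneg_right (le_trans (hφbdd z.1) (le_abs_self Cφ)) (abs_nonneg _)
  -- measurability of bases
  have hbm : ∀ ε ∈ Set.Ioc (0:ℝ) 1, ∀ n, MeasurableSet (toothBase ω (xb ε n) (l ε n)) := by
    intro ε hε n
    rw [toothBase_eq_preimage ω _ (hl ε hε n).1.ne']
    exact (by fun_prop : Measurable (fun x : Fin N → ℝ => (l ε n)⁻¹ • (x - xb ε n))) hωm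
  have hsm : MeasurableSet (Ω' ×ˢ Y) := (hΩ'o.measurableSet).prod hYo.measurableSet
  -- pointwise bound on the error
  have hgb : ∀ ε ∈ Set.Ioc (0:ℝ) 1, ∀ z ∈ Ω' ×ˢ Y,
      |T ε z - Set.indicator (⋃ n, toothBase ω (xb ε n) (l ε n)) (fun _ => (1:ℝ)) z.1 *
        (φ z.1 * ψ z.2)| ≤ (2*(K:ℝ)*C*R₁*ε) * |ψ z.2| := by
    intro ε hε z hz
    by_cases hx : z.1 ∈ ⋃ n, toothBase ω (xb ε n) (l ε n)
    · obtain ⟨n, hn⟩ := mem_iUnion.mp hx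
      rw [hval ε hε z hz.2 n hn, indicator_of_mem hx, one_mul]
      have heq : φ (xb ε n + l ε n • z.2.1) * ψ z.2 - φ z.1 * ψ z.2
          = (φ (xb ε n + l ε n • z.2.1) - φ z.1) * ψ z.2 := by ring
      rw [heq, abs_mul]
      refine mul_le_mul_of_nonneg_right ?_ (abs_nonneg _)
      obtain ⟨ξ', hξ', hx'⟩ := hn
      have hd := hφlip.dist_le_mul (xb ε n + l ε n • z.2.1) z.1
      rw [Real.dist_eq] at hd
      refine hd.trans ?_
      have hlp := (hl ε hε n).1
      have hdist : dist (xb ε n + l ε n • z.2.1) z.1 ≤ l ε n * (2*R₁) := by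
        rw [← hx', dist_eq_norm]
        have hsub : (xb ε n + l ε n • z.2.1) - (xb ε n + l ε n • ξ') = l ε n • (z.2.1 - ξ') := by
          rw [add_sub_add_left_eq_sub, ← smul_sub]
        rw [hsub, norm_smul, Real.norm_eq_abs, abs_of_pos hlp]
        have h1 : ‖z.2.1 - ξ'‖ ≤ ‖z.2.1‖ + ‖ξ'‖ := norm_sub_le _ _
        have h2 : ‖z.2.1‖ < R₁ := mem_ball_zero_iff.mp (hYsub hz.2).1
        have h3 : ‖ξ'‖ < R₁ := mem_ball_zero_iff.mp (hωsub hξ')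
        nlinarith
      calc (K:ℝ) * dist (xb ε n + l ε n • z.2.1) z.1 ≤ K * (l ε n * (2*R₁)) :=
            mul_le_mul_of_nonneg_left hdist K.coe_nonneg
        _ ≤ K * ((C*ε) * (2*R₁)) := by
            refine mul_le_mul_of_nonneg_left ?_ K.coe_nonneg
            exact mul_le_mul_of_nonneg_right (hl ε hε n).2 (by positivity)
        _ = 2*(K:ℝ)*C*R₁*ε := by ring
    · rw [hzero ε hε z hx, indicator_of_notMem hx, zero_mul, sub_zero, abs_zero]
      have : (0:ℝ) ≤ 2*(K:ℝ)*C*R₁*ε :=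
        mul_nonneg (mul_nonneg (mul_nonneg (mul_nonneg two_pos.le K.coe_nonneg) hC.le) hR₁.le)
          hε.1.le
      positivity
  -- a.e.-strong measurability of T ε
  have hTm : ∀ ε ∈ Set.Ioc (0:ℝ) 1, AEStronglyMeasurable (T ε) μ := by
    intro ε hε
    have hS : AEStronglyMeasurable (fun z : (Fin N → ℝ) × ((Fin N → ℝ) × ℝ) =>
        ∑ n : Fin (NT ε), Set.indicator (toothBase ω (xb ε n) (l ε n)) (fun _ => (1:ℝ)) z.1 *
          (φ (xb ε n + l ε n • z.2.1) * ψ z.2)) μ := by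
      refine Finset.aestronglyMeasurable_fun_sum _ (fun n _ => ?_)
      refine AEStronglyMeasurable.mul ?_ (AEStronglyMeasurable.mul ?_ hψs.1)
      · exact ((measurable_const.indicator (hbm ε hε n)).comp measurable_fst).aestronglyMeasurable
      · exact (hφlip.continuous.comp (continuous_const.add
          ((continuous_fst.comp continuous_snd).const_smul (l ε n)))).aestronglyMeasurable
    refine hS.congr ?_
    filter_upwards [ae_restrict_mem hsm] with z hz
    by_cases hx : z.1 ∈ ⋃ n, toothBase ω (xb ε n) (l ε n)
    · obtain ⟨n, hn⟩ := mem_iUnion.mp hx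
      rw [Finset.sum_eq_single n]
      · rw [indicator_of_mem hn, one_mul, hval ε hε z hz.2 n hn]
      · intro m _ hmn
        rw [indicator_of_notMem (fun hm => (Set.disjoint_left.mp (hbdisj ε hε m n hmn) hm) hn),
          zero_mul]
      · intro hm
        exact absurd (Finset.mem_univ n) hm
    · rw [hzero ε hε z hx]
      refine Finset.sum_eq_zero fun n _ => ?_
      rw [indicator_of_notMem (fun h => hx (mem_iUnion.mpr ⟨n, h⟩)), zero_mul]
  have hχm : ∀ ε ∈ Set.Ioc (0:ℝ) 1,
      MeasurableSet (⋃ n, toothBase ω (xb ε n) (l ε n)) := fun ε hε =>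
    MeasurableSet.iUnion (fun n => hbm ε hε n)
  have hχw₀ : ∀ ε ∈ Set.Ioc (0:ℝ) 1, MemLp (fun z : (Fin N → ℝ) × ((Fin N → ℝ) × ℝ) =>
      Set.indicator (⋃ n, toothBase ω (xb ε n) (l ε n)) (fun _ => (1:ℝ)) z.1 *
        (φ z.1 * ψ z.2)) 2 μ := by
    intro ε hε
    refine MemLp.of_le hw₀ (AEStronglyMeasurable.mul
      (((measurable_const.indicator (hχm ε hε)).comp measurable_fst).aestronglyMeasurable)
      hw₀.1) (Eventually.of_forall fun z => ?_)
    rw [Real.norm_eq_abs, Real.norm_eq_abs, abs_mul]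
    by_cases hx : z.1 ∈ ⋃ n, toothBase ω (xb ε n) (l ε n)
    · rw [indicator_of_mem hx]
      simp
    · rw [indicator_of_notMem hx]
      simp [abs_nonneg]
      positivity
  have hgm : ∀ ε ∈ Set.Ioc (0:ℝ) 1, MemLp (fun z : (Fin N → ℝ) × ((Fin N → ℝ) × ℝ) =>
      T ε z - Set.indicator (⋃ n, toothBase ω (xb ε n) (l ε n)) (fun _ => (1:ℝ)) z.1 *
        (φ z.1 * ψ z.2)) 2 μ := by
    intro ε hε
    have hc : (0:ℝ) ≤ 2*(K:ℝ)*C*R₁*ε :=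
      mul_nonneg (mul_nonneg (mul_nonneg (mul_nonneg two_pos.le K.coe_nonneg) hC.le) hR₁.le)
        hε.1.le
    refine MemLp.of_le (hψs.const_mul (2*(K:ℝ)*C*R₁*ε))
      ((hTm ε hε).sub (hχw₀ ε hε).1) ?_
    filter_upwards [ae_restrict_mem hsm] with z hz
    rw [Real.norm_eq_abs, Real.norm_eq_abs, abs_mul, abs_of_nonneg hc]
    exact hgb ε hε z hz
  have hTmem : ∀ ε ∈ Set.Ioc (0:ℝ) 1, MemLp (T ε) 2 μ := by
    intro ε hε
    have heq : T ε = (fun z : (Fin N → ℝ) × ((Fin N → ℝ) × ℝ) =>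
        T ε z - Set.indicator (⋃ n, toothBase ω (xb ε n) (l ε n)) (fun _ => (1:ℝ)) z.1 *
          (φ z.1 * ψ z.2)) + (fun z : (Fin N → ℝ) × ((Fin N → ℝ) × ℝ) =>
        Set.indicator (⋃ n, toothBase ω (xb ε n) (l ε n)) (fun _ => (1:ℝ)) z.1 *
          (φ z.1 * ψ z.2)) := by
      funext z; simp
    rw [heq]
    exact (hgm ε hε).add (hχw₀ ε hε)
  have hgnorm : ∀ ε ∈ Set.Ioc (0:ℝ) 1,
      (eLpNorm (fun z : (Fin N → ℝ) × ((Fin N → ℝ) × ℝ) =>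
        T ε z - Set.indicator (⋃ n, toothBase ω (xb ε n) (l ε n)) (fun _ => (1:ℝ)) z.1 *
          (φ z.1 * ψ z.2)) 2 μ).toReal ≤ (2*(K:ℝ)*C*R₁*ε) *
      (eLpNorm (fun z : (Fin N → ℝ) × ((Fin N → ℝ) × ℝ) => ψ z.2) 2 μ).toReal := by
    intro ε hε
    have hc : (0:ℝ) ≤ 2*(K:ℝ)*C*R₁*ε :=
      mul_nonneg (mul_nonneg (mul_nonneg (mul_nonneg two_pos.le K.coe_nonneg) hC.le) hR₁.le)
        hε.1.le
    have h1 : eLpNorm (fun z : (Fin N → ℝ) × ((Fin N → ℝ) × ℝ) =>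
        T ε z - Set.indicator (⋃ n, toothBase ω (xb ε n) (l ε n)) (fun _ => (1:ℝ)) z.1 *
          (φ z.1 * ψ z.2)) 2 μ ≤
        eLpNorm (fun z : (Fin N → ℝ) × ((Fin N → ℝ) × ℝ) => (2*(K:ℝ)*C*R₁*ε) * ψ z.2) 2 μ := by
      refine eLpNorm_mono_ae ?_
      filter_upwards [ae_restrict_mem hsm] with z hz
      rw [Real.norm_eq_abs, Real.norm_eq_abs, abs_mul, abs_of_nonneg hc]
      exact hgb ε hε z hz
    have h2 : eLpNorm (fun z : (Fin N → ℝ) × ((Fin N → ℝ) × ℝ) =>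
        (2*(K:ℝ)*C*R₁*ε) * ψ z.2) 2 μ = ‖(2*(K:ℝ)*C*R₁*ε)‖₊ *
        eLpNorm (fun z : (Fin N → ℝ) × ((Fin N → ℝ) × ℝ) => ψ z.2) 2 μ := by
      have heq : (fun z : (Fin N → ℝ) × ((Fin N → ℝ) × ℝ) => (2*(K:ℝ)*C*R₁*ε) * ψ z.2)
          = (2*(K:ℝ)*C*R₁*ε) • (fun z : (Fin N → ℝ) × ((Fin N → ℝ) × ℝ) => ψ z.2) := rfl
      rw [heq, eLpNorm_const_smul, enorm_eq_nnnorm]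
    calc (eLpNorm (fun z : (Fin N → ℝ) × ((Fin N → ℝ) × ℝ) =>
        T ε z - Set.indicator (⋃ n, toothBase ω (xb ε n) (l ε n)) (fun _ => (1:ℝ)) z.1 *
          (φ z.1 * ψ z.2)) 2 μ).toReal
        ≤ (↑‖(2*(K:ℝ)*C*R₁*ε)‖₊ * eLpNorm (fun z : (Fin N → ℝ) × ((Fin N → ℝ) × ℝ) =>
            ψ z.2) 2 μ).toReal := by
          refine ENNReal.toReal_mono (ENNReal.mul_ne_top ENNReal.coe_ne_top hψs.2.ne) ?_
          rw [← h2]; exact h1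
      _ = (2*(K:ℝ)*C*R₁*ε) * (eLpNorm (fun z : (Fin N → ℝ) × ((Fin N → ℝ) × ℝ) =>
            ψ z.2) 2 μ).toReal := by
          rw [ENNReal.toReal_mul, ENNReal.coe_toReal, coe_nnnorm, Real.norm_eq_abs,
            abs_of_nonneg hc]
  have hsplit : ∀ ε ∈ Set.Ioc (0:ℝ) 1,
      ∫ z, v ε z * T ε z ∂μ = (∫ z, v ε z * (φ z.1 * ψ z.2) ∂μ) +
        ∫ z, v ε z * (T ε z - Set.indicator (⋃ n, toothBase ω (xb ε n) (l ε n))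
          (fun _ => (1:ℝ)) z.1 * (φ z.1 * ψ z.2)) ∂μ := by
    intro ε hε
    have hi1 : Integrable (fun z : (Fin N → ℝ) × ((Fin N → ℝ) × ℝ) => v ε z *
        (Set.indicator (⋃ n, toothBase ω (xb ε n) (l ε n)) (fun _ => (1:ℝ)) z.1 *
          (φ z.1 * ψ z.2))) μ := my_integrable_mul (hv ε hε) (hχw₀ ε hε)
    have hi2 : Integrable (fun z : (Fin N → ℝ) × ((Fin N → ℝ) × ℝ) => v ε z *
        (T ε z - Set.indicator (⋃ n, toothBase ω (xb ε n) (l ε n)) (fun _ => (1:ℝ)) z.1 *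
          (φ z.1 * ψ z.2))) μ := my_integrable_mul (hv ε hε) (hgm ε hε)
    have h3 : (fun z : (Fin N → ℝ) × ((Fin N → ℝ) × ℝ) => v ε z * T ε z) = fun z =>
        v ε z * (Set.indicator (⋃ n, toothBase ω (xb ε n) (l ε n)) (fun _ => (1:ℝ)) z.1 *
          (φ z.1 * ψ z.2)) +
        v ε z * (T ε z - Set.indicator (⋃ n, toothBase ω (xb ε n) (l ε n))
          (fun _ => (1:ℝ)) z.1 * (φ z.1 * ψ z.2)) := by
      funext z; ring
    rw [h3, integral_add hi1 hi2]
    congr 1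
    refine integral_congr_ae ?_
    filter_upwards [hχv ε hε] with z hz
    calc v ε z * (Set.indicator (⋃ n, toothBase ω (xb ε n) (l ε n)) (fun _ => (1:ℝ)) z.1 *
          (φ z.1 * ψ z.2))
        = (Set.indicator (⋃ n, toothBase ω (xb ε n) (l ε n)) (fun _ => (1:ℝ)) z.1 * v ε z) *
          (φ z.1 * ψ z.2) := by ring
      _ = v ε z * (φ z.1 * ψ z.2) := by rw [hz]
  -- reduce to sequences
  rw [tendsto_iff_seq_tendsto]
  intro u hu
  have humem : ∀ᶠ k in atTop, u k ∈ Set.Ioc (0:ℝ) 1 := eventually_mem_of_tendsto_nhdsWithin hu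
  set u' : ℕ → ℝ := fun k => if u k ∈ Set.Ioc (0:ℝ) 1 then u k else 1 with hu'def
  have hu'mem : ∀ k, u' k ∈ Set.Ioc (0:ℝ) 1 := by
    intro k
    simp only [hu'def]
    split_ifs with h
    · exact h
    · exact ⟨one_pos, le_rfl⟩
  have hue : u' =ᶠ[atTop] u := humem.mono fun k hk => if_pos hk
  have hu'0 : Tendsto u' atTop (nhds 0) :=
    (tendsto_nhds_of_tendsto_nhdsWithin hu).congr' hue.symm
  have hu't : Tendsto u' atTop (nhdsWithin 0 (Set.Ioc (0:ℝ) 1)) :=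
    tendsto_nhdsWithin_iff.mpr ⟨hu'0, Eventually.of_forall hu'mem⟩
  -- uniform bound via Banach–Steinhaus
  set V : ℕ → Lp ℝ 2 μ := fun k => ((hv (u' k) (hu'mem k)).toLp (v (u' k))) with hVdef
  have hpt : ∀ f : Lp ℝ 2 μ, ∃ Cb : ℝ, ∀ k, ‖(innerSL ℝ (V k)) f‖ ≤ Cb := by
    intro f
    have hfm : MemLp (⇑f) 2 μ := Lp.memLp f
    have hconv : Tendsto (fun k => ∫ z, v (u' k) z * f z ∂μ) atTop
        (nhds (∫ z, vlim z * f z ∂μ)) := (hweak (⇑f) hfm).comp hu't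
    have heq : ∀ k, (innerSL ℝ (V k)) f = ∫ z, v (u' k) z * f z ∂μ := by
      intro k
      rw [innerSL_apply_apply, L2.inner_def]
      refine integral_congr_ae ?_
      filter_upwards [(hv (u' k) (hu'mem k)).coeFn_toLp] with z h1
      simp [RCLike.inner_apply, hVdef, h1, mul_comm]
    have hb : Tendsto (fun k => ‖(innerSL ℝ (V k)) f‖) atTop
        (nhds ‖∫ z, vlim z * f z ∂μ‖) := by
      simp only [heq]
      exact hconv.norm
    obtain ⟨Cb, hCb⟩ := hb.bddAbove_range
    exact ⟨Cb, fun k => hCb (mem_range_self k)⟩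
  obtain ⟨C', hC'⟩ := banach_steinhaus hpt
  have hC'0 : (0:ℝ) ≤ C' := le_trans (norm_nonneg _) (hC' 0)
  have hVb : ∀ k, (eLpNorm (v (u' k)) 2 μ).toReal ≤ C' := by
    intro k
    have h1 : ‖V k‖ = (eLpNorm (v (u' k)) 2 μ).toReal := Lp.norm_toLp _ _
    rw [← h1, ← innerSL_apply_norm (𝕜 := ℝ) (V k)]
    exact hC' k
  -- main term converges
  have hmain : Tendsto (fun k => ∫ z, v (u' k) z * (φ z.1 * ψ z.2) ∂μ) atTop
      (nhds (∫ z, vlim z * (φ z.1 * ψ z.2) ∂μ)) :=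
    (hweak (fun z => φ z.1 * ψ z.2) hw₀).comp hu't
  -- error term tends to zero
  have herr : Tendsto (fun k => ∫ z, v (u' k) z * (T (u' k) z -
      Set.indicator (⋃ n, toothBase ω (xb (u' k) n) (l (u' k) n)) (fun _ => (1:ℝ)) z.1 *
        (φ z.1 * ψ z.2)) ∂μ) atTop (nhds 0) := by
    refine squeeze_zero_norm (a := fun k => C' * ((2*(K:ℝ)*C*R₁*(u' k)) *
      (eLpNorm (fun z : (Fin N → ℝ) × ((Fin N → ℝ) × ℝ) => ψ z.2) 2 μ).toReal)) ?_ ?_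
    · intro k
      rw [Real.norm_eq_abs]
      calc |∫ z, v (u' k) z * (T (u' k) z -
            Set.indicator (⋃ n, toothBase ω (xb (u' k) n) (l (u' k) n)) (fun _ => (1:ℝ)) z.1 *
              (φ z.1 * ψ z.2)) ∂μ|
          ≤ (eLpNorm (v (u' k)) 2 μ).toReal * (eLpNorm (fun z : (Fin N → ℝ) ×
              ((Fin N → ℝ) × ℝ) => T (u' k) z -
              Set.indicator (⋃ n, toothBase ω (xb (u' k) n) (l (u' k) n)) (fun _ => (1:ℝ)) z.1 *
                (φ z.1 * ψ z.2)) 2 μ).toReal :=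
            my_cauchy_schwarz (hv (u' k) (hu'mem k)) (hgm (u' k) (hu'mem k))
        _ ≤ C' * ((2*(K:ℝ)*C*R₁*(u' k)) * (eLpNorm (fun z : (Fin N → ℝ) ×
              ((Fin N → ℝ) × ℝ) => ψ z.2) 2 μ).toReal) :=
            mul_le_mul (hVb k) (hgnorm (u' k) (hu'mem k)) ENNReal.toReal_nonneg hC'0
    · have h0 : Tendsto (fun k => C' * ((2*(K:ℝ)*C*R₁*(u' k)) *
          (eLpNorm (fun z : (Fin N → ℝ) × ((Fin N → ℝ) × ℝ) => ψ z.2) 2 μ).toReal)) atTop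
          (nhds (C' * ((2*(K:ℝ)*C*R₁*(0:ℝ)) *
          (eLpNorm (fun z : (Fin N → ℝ) × ((Fin N → ℝ) × ℝ) => ψ z.2) 2 μ).toReal))) := by
        exact ((hu'0.const_mul (2*(K:ℝ)*C*R₁)).mul_const _).const_mul C'
      simpa using h0
  have hfinal := hmain.add herr
  rw [add_zero] at hfinal
  have hfin2 : Tendsto (fun k => ∫ z, v (u' k) z * T (u' k) z ∂μ) atTop
      (nhds (∫ z, vlim z * (φ z.1 * ψ z.2) ∂μ)) := by
    refine hfinal.congr fun k => ?_
    exact (hsplit (u' k) (hu'mem k)).symm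
  refine hfin2.congr' ?_
  filter_upwards [hue] with k hk
  simp only [Function.comp]
  rw [hk]

end
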